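/- In a finite graph G with rank decomposition V(G) = U_1 ∪ … ∪ U_{m+1} (vertices grouped by rank), any vertex u not in the kernel (i.e., with rank(u) < rank(G)) has the same adjacency to all vertices of equal or higher rank: either u is adjacent to all of them (universal type) or to none of them (isolated type). -/

import Mathlib

def IsIsolatedVx {V : Type u} (G : SimpleGraph V) (v : V) : Prop := ∀ u, ¬G.Adj v u

def IsUniversalVx {V : Type u} (G : SimpleGraph V) (v : V) : Prop := ∀ u, u ≠ v → G.Adj v u

def IsNormalG {V : Type u} (G : SimpleGraph V) : Prop :=
  (∀ v, ¬IsIsolatedVx G v) ∧ (∀ v, ¬IsUniversalVx G v)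

/-- The condition for a graph to have rank 1: it is empty, complete, or normal. -/
def Rank1Cond {V : Type u} (G : SimpleGraph V) : Prop := G = ⊥ ∨ G = ⊤ ∨ IsNormalG G

/-- The inductive rank of a finite graph. -/
inductive HasRank : ∀ {V : Type u} [Finite V], SimpleGraph V → ℕ → Prop where
  | base {V : Type u} [Finite V] (G : SimpleGraph V) :
      Rank1Cond G → HasRank G 1
  | peel {V : Type u} [Finite V] (G : SimpleGraph V) (r : ℕ) :
      ¬Rank1Cond G → ¬G.Connected →
      HasRank (G.induce {v | ¬IsIsolatedVx G v}) r → HasRank G (r + 1)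
  | compl {V : Type u} [Finite V] (G : SimpleGraph V) (r : ℕ) :
      ¬Rank1Cond G → G.Connected → HasRank Gᶜ r → HasRank G r

/-- `∂G`: the universal vertices if `G` is connected, the isolated vertices otherwise. -/
def Boundary {V : Type u} (G : SimpleGraph V) : Set V :=
  {v | (G.Connected ∧ IsUniversalVx G v) ∨ (¬G.Connected ∧ IsIsolatedVx G v)}

/-- The inductive rank of a vertex: in a rank-1 graph every vertex has rank 1;
otherwise the vertices of `∂G` have rank 1 and the remaining vertices have rank one
more than their rank in `G − ∂G`. -/
inductive VRank : ∀ {V : Type u} [Finite V], SimpleGraph V → V → ℕ → Prop where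
  | base {V : Type u} [Finite V] (G : SimpleGraph V) (v : V) :
      Rank1Cond G → VRank G v 1
  | bdry {V : Type u} [Finite V] (G : SimpleGraph V) (v : V) :
      ¬Rank1Cond G → v ∈ Boundary G → VRank G v 1
  | step {V : Type u} [Finite V] (G : SimpleGraph V) (v : V)
      (hv : v ∈ (Boundary G)ᶜ) (r : ℕ) :
      ¬Rank1Cond G → VRank (G.induce (Boundary G)ᶜ) ⟨v, hv⟩ r → VRank G v (r + 1)


universe u

lemma isolated_compl_iff {V : Type u} (G : SimpleGraph V) (v : V) :
    IsIsolatedVx Gᶜ v ↔ IsUniversalVx G v := by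
  constructor
  · intro h u hu
    have := h u
    rw [SimpleGraph.compl_adj] at this
    push_neg at this
    exact this hu.symm
  · intro h u hadj
    rw [SimpleGraph.compl_adj] at hadj
    exact hadj.2 (h u hadj.1.symm)

lemma universal_compl_iff {V : Type u} (G : SimpleGraph V) (v : V) :
    IsUniversalVx Gᶜ v ↔ IsIsolatedVx G v := by
  constructor
  · intro h u
    by_cases hu : u = v
    · subst hu; exact G.loopless.irrefl u
    · have := h u hu
      rw [SimpleGraph.compl_adj] at this
      exact this.2
  · intro h u hu
    rw [SimpleGraph.compl_adj]
    exact ⟨fun he => hu he.symm, h u⟩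

lemma isolated_reachable {V : Type u} {G : SimpleGraph V} {v u : V}
    (h : IsIsolatedVx G v) (hr : G.Reachable v u) : u = v := by
  obtain ⟨w⟩ := hr
  cases w with
  | nil => rfl
  | cons hadj _ => exact absurd hadj (h _)

lemma universal_connected {V : Type u} {G : SimpleGraph V} {v : V}
    (h : IsUniversalVx G v) : G.Connected := by
  rw [SimpleGraph.connected_iff]
  refine ⟨fun a b => ?_, ⟨v⟩⟩
  have hav : G.Reachable a v := by
    by_cases ha : a = v
    · subst ha; exact SimpleGraph.Reachable.refl _
    · exact ((h a ha).symm : G.Adj a v).reachable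
  have hbv : G.Reachable b v := by
    by_cases hb : b = v
    · subst hb; exact SimpleGraph.Reachable.refl _
    · exact ((h b hb).symm : G.Adj b v).reachable
  exact hav.trans hbv.symm

lemma boundary_compl {V : Type u} (G : SimpleGraph V) : Boundary Gᶜ = Boundary G := by
  ext v
  simp only [Boundary, Set.mem_setOf_eq]
  constructor
  · rintro (⟨hc, hu⟩ | ⟨hc, hi⟩)
    · have hiso : IsIsolatedVx G v := (universal_compl_iff G v).1 hu
      by_cases hgc : G.Connected
      · left
        refine ⟨hgc, fun w hw => absurd (isolated_reachable hiso (hgc.preconnected v w)) hw⟩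
      · right; exact ⟨hgc, hiso⟩
    · have huni : IsUniversalVx G v := (isolated_compl_iff G v).1 hi
      by_cases hgc : G.Connected
      · left; exact ⟨hgc, huni⟩
      · exact absurd (universal_connected huni) hgc
  · rintro (⟨hc, hu⟩ | ⟨hc, hi⟩)
    · have hiso : IsIsolatedVx Gᶜ v := (isolated_compl_iff G v).2 hu
      by_cases hgc : Gᶜ.Connected
      · left
        refine ⟨hgc, fun w hw => absurd (isolated_reachable hiso (hgc.preconnected v w)) hw⟩
      · right; exact ⟨hgc, hiso⟩
    · have huni : IsUniversalVx Gᶜ v := (universal_compl_iff G v).2 hi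
      by_cases hgc : Gᶜ.Connected
      · left; exact ⟨hgc, huni⟩
      · exact absurd (universal_connected huni) hgc
  
lemma rank1cond_compl {V : Type u} (G : SimpleGraph V) (h : Rank1Cond G) : Rank1Cond Gᶜ := by
  rcases h with h | h | h
  · right; left; rw [h]; ext a b; simp
  · left; rw [h]; ext a b; simp
  · right; right
    exact ⟨fun v hv => h.2 v ((isolated_compl_iff G v).1 hv),
           fun v hv => h.1 v ((universal_compl_iff G v).1 hv)⟩

lemma induce_compl_eq {V : Type u} (G : SimpleGraph V) (s : Set V) :
    Gᶜ.induce s = (G.induce s)ᶜ := by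
  ext a b
  simp [SimpleGraph.compl_adj, Subtype.ext_iff, SimpleGraph.comap_adj]
lemma boundary_compl_of_not_connected {V : Type u} (G : SimpleGraph V) (h : ¬G.Connected) :
    (Boundary G)ᶜ = {v | ¬IsIsolatedVx G v} := by
  ext v
  simp [Boundary, h]

lemma vrank_pos {V : Type u} [Finite V] {G : SimpleGraph V} {v : V} {r : ℕ}
    (h : VRank G v r) : 1 ≤ r := by
  cases h <;> omega

lemma not_rank1cond_compl {V : Type u} {G : SimpleGraph V} (h : ¬Rank1Cond G) :
    ¬Rank1Cond Gᶜ := fun hc => h (by simpa using rank1cond_compl Gᶜ hc)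

lemma vrank_induce_congr {V : Type u} [Finite V] (G : SimpleGraph V) {s t : Set V}
    (h : s = t) {v : V} (hv : v ∈ s) {r : ℕ}
    (hr : VRank (G.induce s) ⟨v, hv⟩ r) : VRank (G.induce t) ⟨v, h ▸ hv⟩ r := by
  subst h; exact hr

lemma vrank_compl {V : Type u} [Finite V] {G : SimpleGraph V} {v : V} {r : ℕ}
    (h : VRank G v r) : VRank Gᶜ v r := by
  induction h with
  | base G v h1 => exact VRank.base _ _ (rank1cond_compl G h1)
  | bdry G v h1 hb =>
      exact VRank.bdry _ _ (not_rank1cond_compl h1) (by rw [boundary_compl]; exact hb)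
  | step G v hv r h1 hsub ih =>
      have h1' : ¬Rank1Cond Gᶜ := not_rank1cond_compl h1
      have hv' : v ∈ (Boundary Gᶜ)ᶜ := by rw [boundary_compl]; exact hv
      refine VRank.step Gᶜ v hv' r h1' ?_
      revert hv'
      rw [boundary_compl, induce_compl_eq]
      intro hv'
      exact ih

lemma main_aux : ∀ {V : Type u} [Finite V] (G : SimpleGraph V) (m : ℕ), HasRank G m →
    ∀ (u : V) (i : ℕ), VRank G u i → i < m →
    (∀ w, w ≠ u → (∃ j, i ≤ j ∧ VRank G w j) → G.Adj u w) ∨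
    (∀ w, w ≠ u → (∃ j, i ≤ j ∧ VRank G w j) → ¬G.Adj u w) := by
  intro V _ G m hG
  induction hG with
  | base G h1 =>
      intro u i hu hik
      exact absurd hik (by have := vrank_pos hu; omega)
  | peel G r h1 hnc hsub ih =>
      intro u i hu hik
      cases hu with
      | base _ _ hc => exact absurd hc h1
      | bdry _ _ _ hb =>
          right
          rcases hb with ⟨hc, _⟩ | ⟨_, hiso⟩
          · exact absurd hc hnc
          · exact fun w _ _ hadj => hiso w hadj
      | step _ _ hv r' _ hsub' =>
          have hS : (Boundary G)ᶜ = {v | ¬IsIsolatedVx G v} :=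
            boundary_compl_of_not_connected G hnc
          have hsub2 := vrank_induce_congr G hS hv hsub'
          have hr' : r' < r := by omega
          have hpos : 1 ≤ r' := vrank_pos hsub'
          rcases ih ⟨u, hS ▸ hv⟩ r' hsub2 hr' with hL | hR
          · left
            rintro w hwu ⟨j, hij, hwj⟩
            cases hwj with
            | base _ _ hc => exact absurd hc h1
            | bdry => exact absurd hij (by omega)
            | step _ _ hw j' _ hsubw =>
                have hsubw2 := vrank_induce_congr G hS hw hsubw
                have hne : (⟨w, hS ▸ hw⟩ : {v | ¬IsIsolatedVx G v}) ≠ ⟨u, hS ▸ hv⟩ :=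
                  fun h => hwu (congrArg Subtype.val h)
                exact hL ⟨w, hS ▸ hw⟩ hne ⟨j', by omega, hsubw2⟩
          · right
            rintro w hwu ⟨j, hij, hwj⟩
            cases hwj with
            | base _ _ hc => exact absurd hc h1
            | bdry => exact absurd hij (by omega)
            | step _ _ hw j' _ hsubw =>
                have hsubw2 := vrank_induce_congr G hS hw hsubw
                have hne : (⟨w, hS ▸ hw⟩ : {v | ¬IsIsolatedVx G v}) ≠ ⟨u, hS ▸ hv⟩ :=
                  fun h => hwu (congrArg Subtype.val h)
                exact hR ⟨w, hS ▸ hw⟩ hne ⟨j', by omega, hsubw2⟩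
  | compl G r h1 hc hsub ih =>
      intro u i hu hik
      have hu' := vrank_compl hu
      rcases ih u i hu' hik with hL | hR
      · right
        rintro w hwu ⟨j, hij, hwj⟩ hadj
        have := hL w hwu ⟨j, hij, vrank_compl hwj⟩
        rw [SimpleGraph.compl_adj] at this
        exact this.2 hadj
      · left
        rintro w hwu ⟨j, hij, hwj⟩
        have := hR w hwu ⟨j, hij, vrank_compl hwj⟩
        by_contra hnadj
        exact this ((SimpleGraph.compl_adj _ _ _).mpr ⟨fun h => hwu h.symm, hnadj⟩)


/-- A vertex `u` whose rank is smaller than the rank of the graph (i.e. a non-kernel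
vertex) has the same adjacency to all other vertices of equal or higher rank: it is
adjacent either to all of them (universal type) or to none of them (isolated type). -/
theorem stmt_13 {V : Type u} [Finite V] (G : SimpleGraph V) (m : ℕ)
    (hG : HasRank G m) (u : V) (i : ℕ) (hu : VRank G u i) (hik : i < m) :
    (∀ w, w ≠ u → (∃ j, i ≤ j ∧ VRank G w j) → G.Adj u w) ∨
    (∀ w, w ≠ u → (∃ j, i ≤ j ∧ VRank G w j) → ¬G.Adj u w) := by
  exact main_aux G m hG u i hu hik
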